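/- For a nonzero formal polynomial P over R_max with lower degree m and degree n, the canonical form P^c defined by P^c_k = inf_{y ∈ R} (P̂(y) - k y) for k ∈ N satisfies: (1) the infimum is attained (or equals -∞) for every k; (2) P^c has the same lower degree and degree as P; (3) P̂^c = P̂; and (4) P^c is the maximum, for the coefficient-wise order, of all formal polynomials Q with Q̂ = P̂. -/

import Mathlib

set_option linter.unusedVariables false

noncomputable section

/-- The max-plus (tropical) semifield `R_max = ℝ ∪ {-∞}`, with addition `max`
and multiplication `+`. -/
abbrev RMax := WithBot ℝ

/-- The polynomial function `P̂(y) = max_{k ≤ n} (P_k + k·y)` of a formal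
polynomial over `R_max` of degree at most `n`. -/
def tPhat (P : ℕ → RMax) (n : ℕ) (y : RMax) : RMax :=
  (Finset.range (n + 1)).sup fun k => P k + k • y

open Finset Filter

lemma rmx_nsmul_coe (k : ℕ) (y : ℝ) : (k • (y : RMax)) = ((k * y : ℝ) : RMax) := by
  induction k with
  | zero => simp
  | succ k ih =>
      rw [succ_nsmul, ih, ← WithBot.coe_add]
      norm_num [add_mul]

lemma rmx_nsmul_bot (k : ℕ) (hk : k ≠ 0) : (k • (⊥ : RMax)) = ⊥ := by
  cases k with
  | zero => exact absurd rfl hk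
  | succ k => rw [succ_nsmul]; simp

lemma coe_glb_elem {g : ℝ → ℝ} {b : RMax}
    (hb : IsGLB (Set.range fun y => ((g y : ℝ) : RMax)) b) (y : ℝ) : b ≤ ↑(g y) :=
  hb.1 ⟨y, rfl⟩

lemma coe_glb_mono {g : ℝ → ℝ} {b : RMax}
    (hb : IsGLB (Set.range fun y => ((g y : ℝ) : RMax)) b) {c : ℝ}
    (h : ∀ y, c ≤ g y) : (c : RMax) ≤ b :=
  hb.2 (by rintro x ⟨y, rfl⟩; exact WithBot.coe_le_coe.mpr (h y))

lemma coe_glb_bot {g : ℝ → ℝ} {b : RMax}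
    (hb : IsGLB (Set.range fun y => ((g y : ℝ) : RMax)) b)
    (h : ∀ c : ℝ, ∃ y, g y < c) : b = ⊥ := by
  by_contra hbot
  obtain ⟨r, rfl⟩ := WithBot.ne_bot_iff_exists.mp hbot
  obtain ⟨y, hy⟩ := h r
  exact absurd (WithBot.coe_le_coe.mp (coe_glb_elem hb y)) (not_le.mpr hy)

lemma coe_glb_min {g : ℝ → ℝ} {b : RMax}
    (hb : IsGLB (Set.range fun y => ((g y : ℝ) : RMax)) b)
    {y0 : ℝ} (h : ∀ y, g y0 ≤ g y) : b = ↑(g y0) := by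
  refine hb.unique ⟨?_, fun c hc => hc ⟨y0, rfl⟩⟩
  rintro x ⟨y, rfl⟩; exact WithBot.coe_le_coe.mpr (h y)

lemma tPhat_bot (Q : ℕ → RMax) (n : ℕ) : tPhat Q n ⊥ = Q 0 := by
  unfold tPhat
  apply le_antisymm
  · apply Finset.sup_le
    intro k hk
    cases k with
    | zero => simp
    | succ k => rw [rmx_nsmul_bot _ (Nat.succ_ne_zero k), WithBot.add_bot]; exact bot_le
  · have h0 : (0:ℕ) ∈ Finset.range (n+1) := by simp
    have := Finset.le_sup (f := fun k => Q k + k • (⊥:RMax)) h0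
    simpa using this

lemma tPhat_coe (P : ℕ → RMax) (n : ℕ)
    (hS : ((Finset.range (n+1)).filter (fun j => P j ≠ ⊥)).Nonempty) (y : ℝ) :
    tPhat P n (y : RMax) =
      ↑(((Finset.range (n+1)).filter (fun j => P j ≠ ⊥)).sup' hS
        (fun j => WithBot.unbotD 0 (P j) + j * y)) := by
  rw [Finset.coe_sup']
  unfold tPhat
  apply le_antisymm
  · apply Finset.sup_le
    intro k hk
    by_cases h : P k = ⊥
    · rw [h, WithBot.bot_add]; exact bot_le
    · have hmem : k ∈ (Finset.range (n+1)).filter (fun j => P j ≠ ⊥) :=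
        Finset.mem_filter.mpr ⟨hk, h⟩
      refine le_trans ?_ (Finset.le_sup hmem)
      obtain ⟨r, hr⟩ := WithBot.ne_bot_iff_exists.mp h
      rw [← hr, rmx_nsmul_coe, ← WithBot.coe_add]
      simp [Function.comp, ← hr]
  · apply Finset.sup_le
    intro k hk
    have hk' := Finset.mem_filter.mp hk
    refine le_trans ?_ (Finset.le_sup hk'.1)
    obtain ⟨r, hr⟩ := WithBot.ne_bot_iff_exists.mp hk'.2
    rw [Function.comp_apply, ← hr, rmx_nsmul_coe, ← WithBot.coe_add]
    simp

section Affine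
open Filter
variable {S : Finset ℕ} (hS : S.Nonempty) (a : ℕ → ℝ)

lemma affine_unbdd_high (k : ℕ) (hk : ∀ j ∈ S, j < k) (c : ℝ) :
    ∃ y : ℝ, (S.sup' hS fun j => a j + j * y) - k * y < c := by
  set y0 : ℝ := max 0 (S.sup' hS fun j => (a j - c) / ((k : ℝ) - j)) + 1 with hy0
  refine ⟨y0, ?_⟩
  rw [sub_lt_iff_lt_add, Finset.sup'_lt_iff]
  intro j hj
  have hkj : (0:ℝ) < (k:ℝ) - j := by
    have : (j:ℝ) < k := by exact_mod_cast hk j hj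
    linarith
  have h1 : (a j - c)/((k:ℝ) - j) < y0 := by
    have h2 := Finset.le_sup' (fun j => (a j - c) / ((k : ℝ) - j)) hj
    have h3 := le_max_right (0:ℝ) (S.sup' hS fun j => (a j - c) / ((k : ℝ) - j))
    simp only [hy0]; linarith
  have h4 := (div_lt_iff₀ hkj).mp h1
  nlinarith

lemma affine_unbdd_low (k : ℕ) (hk : ∀ j ∈ S, k < j) (c : ℝ) :
    ∃ y : ℝ, (S.sup' hS fun j => a j + j * y) - k * y < c := by
  set y0 : ℝ := min 0 (S.inf' hS fun j => (c - a j) / ((j : ℝ) - k)) - 1 with hy0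
  refine ⟨y0, ?_⟩
  rw [sub_lt_iff_lt_add, Finset.sup'_lt_iff]
  intro j hj
  have hkj : (0:ℝ) < (j:ℝ) - k := by
    have : (k:ℝ) < j := by exact_mod_cast hk j hj
    linarith
  have h1 : y0 < (c - a j)/((j:ℝ) - k) := by
    have h2 := Finset.inf'_le (fun j => (c - a j) / ((j : ℝ) - k)) hj
    have h3 := min_le_right (0:ℝ) (S.inf' hS fun j => (c - a j) / ((j : ℝ) - k))
    simp only [hy0]; linarith
  have h4 := (lt_div_iff₀ hkj).mp h1
  nlinarith

lemma affine_min_high (n : ℕ) (hnS : n ∈ S) (hn : ∀ j ∈ S, j ≤ n) :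
    ∃ y0 : ℝ, ∀ j ∈ S, a j + j * y0 ≤ a n + n * y0 := by
  have hS : S.Nonempty := ⟨_, hnS⟩
  refine ⟨S.sup' hS (fun j => |a j| + |a n|), fun j hj => ?_⟩
  set y0 := S.sup' hS (fun j => |a j| + |a n|) with hy0
  have hy0j : |a j| + |a n| ≤ y0 := Finset.le_sup' (fun j => |a j| + |a n|) hj
  have hy0n : 0 ≤ y0 := le_trans (by positivity) (Finset.le_sup' (fun j => |a j| + |a n|) hnS)
  rcases eq_or_lt_of_le (hn j hj) with rfl | hlt
  · exact le_rfl
  · have h1 : (1:ℝ) ≤ (n:ℝ) - j := by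
      have : (j:ℝ) + 1 ≤ n := by exact_mod_cast hlt
      linarith
    have h2 : a j - a n ≤ y0 := le_trans (by
      have := le_abs_self (a j); have := neg_abs_le (a n); linarith) hy0j
    nlinarith [mul_nonneg (by linarith : (0:ℝ) ≤ (n:ℝ) - j - 1) hy0n]

lemma affine_min_low (m : ℕ) (hmS : m ∈ S) (hm : ∀ j ∈ S, m ≤ j) :
    ∃ y0 : ℝ, ∀ j ∈ S, a j + j * y0 ≤ a m + m * y0 := by
  have hS : S.Nonempty := ⟨_, hmS⟩
  refine ⟨-(S.sup' hS (fun j => |a j| + |a m|)), fun j hj => ?_⟩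
  set t := S.sup' hS (fun j => |a j| + |a m|) with ht
  have htj : |a j| + |a m| ≤ t := Finset.le_sup' (fun j => |a j| + |a m|) hj
  have htn : 0 ≤ t := le_trans (by positivity) (Finset.le_sup' (fun j => |a j| + |a m|) hmS)
  rcases eq_or_lt_of_le (hm j hj) with rfl | hlt
  · exact le_rfl
  · have h1 : (1:ℝ) ≤ (j:ℝ) - m := by
      have : (m:ℝ) + 1 ≤ j := by exact_mod_cast hlt
      linarith
    have h2 : a j - a m ≤ t := le_trans (by
      have := le_abs_self (a j); have := neg_abs_le (a m); linarith) htj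
    nlinarith [mul_nonneg (by linarith : (0:ℝ) ≤ (j:ℝ) - m - 1) htn]

lemma affine_min_mid (k m n : ℕ) (hmS : m ∈ S) (hnS : n ∈ S) (hm : m < k) (hn : k < n) :
    ∃ y0 : ℝ, ∀ y : ℝ,
      (S.sup' hS fun j => a j + j * y0) - k * y0 ≤ (S.sup' hS fun j => a j + j * y) - k * y := by
  set g : ℝ → ℝ := fun y => (S.sup' hS fun j => a j + j * y) - k * y with hg
  have hsup : (S.sup' hS fun j (y : ℝ) => a j + j * y) = fun y => S.sup' hS fun j => a j + j * y :=
    funext fun y => Finset.sup'_apply hS _ y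
  have hcont : Continuous g := by
    apply Continuous.sub
    · rw [← hsup]
      exact Continuous.finset_sup' hS (fun j _ => by continuity)
    · continuity
  have hslopen : (0:ℝ) < (n:ℝ) - k := by
    have : (k:ℝ) < n := by exact_mod_cast hn
    linarith
  have hslopem : ((m:ℝ) - k) < 0 := by
    have : (m:ℝ) < k := by exact_mod_cast hm
    linarith
  have hbd1 : ∀ y : ℝ, a n + ((n:ℝ) - k) * y ≤ g y := fun y => by
    have := Finset.le_sup' (fun j => a j + j * y) hnS
    simp only [hg]; nlinarith
  have hbd2 : ∀ y : ℝ, a m + ((m:ℝ) - k) * y ≤ g y := fun y => by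
    have := Finset.le_sup' (fun j => a j + j * y) hmS
    simp only [hg]; nlinarith
  have htop : Tendsto g atTop atTop := by
    apply tendsto_atTop_mono hbd1
    exact tendsto_atTop_add_const_left _ _
      ((tendsto_const_mul_atTop_of_pos hslopen).mpr tendsto_id)
  have hbot : Tendsto g atBot atTop := by
    apply tendsto_atTop_mono hbd2
    exact tendsto_atTop_add_const_left _ _
      ((tendsto_const_mul_atTop_of_neg hslopem).mpr tendsto_id)
  have hco : Tendsto g (cocompact ℝ) atTop := by
    rw [cocompact_eq_atBot_atTop]
    exact Filter.tendsto_sup.mpr ⟨hbot, htop⟩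
  exact hcont.exists_forall_le hco

end Affine


/-- Canonical form of a polynomial function over `R_max`: for a nonzero formal
polynomial `P` of lower degree `m` and degree `n`, the canonical form `P^c`,
defined by `P^c_k = inf_{y ∈ ℝ} (P̂(y) - k·y)` (here characterized as the
greatest lower bound), satisfies:
(1) for each `k` the infimum is attained or equals `⊥`;
(2) `P^c` has the same degree `n` and lower degree `m` as `P`;
(3) `P^c` has the same polynomial function as `P`;
(4) `P^c` is the maximum, for the coefficientwise order, of all formal
    polynomials with the same polynomial function as `P`. -/
theorem rmax_canonical_form (P : ℕ → RMax) (m n : ℕ) (hmn : m ≤ n)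
    (hPn : P n ≠ ⊥) (hPm : P m ≠ ⊥)
    (hlow : ∀ k, k < m → P k = ⊥) (hhigh : ∀ k, n < k → P k = ⊥)
    (Pc : ℕ → RMax)
    (hPc : ∀ k : ℕ,
      IsGLB (Set.range fun y : ℝ => tPhat P n (y : RMax) + ((-(k * y) : ℝ) : RMax)) (Pc k)) :
    (∀ k : ℕ, Pc k = ⊥ ∨
      ∃ y : ℝ, tPhat P n (y : RMax) + ((-(k * y) : ℝ) : RMax) = Pc k) ∧
    (Pc n ≠ ⊥ ∧ (∀ k, n < k → Pc k = ⊥) ∧ Pc m ≠ ⊥ ∧ (∀ k, k < m → Pc k = ⊥)) ∧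
    (∀ y : RMax, tPhat Pc n y = tPhat P n y) ∧
    (∀ (Q : ℕ → RMax) (N : ℕ), (∀ k, N < k → Q k = ⊥) →
      (∀ y : RMax, tPhat Q N y = tPhat P n y) → ∀ k, Q k ≤ Pc k) := by
  classical
  set S : Finset ℕ := (Finset.range (n+1)).filter (fun j => P j ≠ ⊥) with hSdef
  have hnS : n ∈ S := Finset.mem_filter.mpr ⟨Finset.mem_range.mpr (Nat.lt_succ_self n), hPn⟩
  have hmS : m ∈ S := Finset.mem_filter.mpr ⟨Finset.mem_range.mpr (Nat.lt_succ_of_le hmn), hPm⟩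
  have hS : S.Nonempty := ⟨n, hnS⟩
  set p : ℕ → ℝ := fun j => WithBot.unbotD 0 (P j) with hpdef
  set F : ℝ → ℝ := fun y => S.sup' hS (fun j => p j + j * y) with hFdef
  have hcoeP : ∀ j ∈ S, P j = ↑(p j) := by
    intro j hj
    obtain ⟨r, hr⟩ := WithBot.ne_bot_iff_exists.mp (Finset.mem_filter.mp hj).2
    rw [← hr]; simp [hpdef, ← hr]
  have hjm : ∀ j ∈ S, m ≤ j := fun j hj => by
    by_contra h
    exact (Finset.mem_filter.mp hj).2 (hlow j (not_le.mp h))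
  have hjn : ∀ j ∈ S, j ≤ n := fun j hj =>
    Nat.lt_succ_iff.mp (Finset.mem_range.mp (Finset.mem_filter.mp hj).1)
  have hhat : ∀ y : ℝ, tPhat P n (y:RMax) = ↑(F y) := fun y => tPhat_coe P n hS y
  have hglb : ∀ k : ℕ, IsGLB (Set.range fun y : ℝ => ((F y - k * y : ℝ) : RMax)) (Pc k) := by
    intro k
    have hset : (fun y : ℝ => tPhat P n (y : RMax) + ((-(k * y) : ℝ) : RMax))
        = fun y : ℝ => ((F y - k * y : ℝ) : RMax) :=
      funext fun y => by rw [hhat y, ← WithBot.coe_add]; exact congrArg _ (by ring)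
    have := hPc k
    rwa [hset] at this
  have hmin : ∀ k, m ≤ k → k ≤ n → ∃ y0 : ℝ, ∀ y, F y0 - k*y0 ≤ F y - k*y := by
    intro k hk1 hk2
    rcases eq_or_lt_of_le hk1 with heq | hk1'
    · rw [← heq]
      obtain ⟨y0, hy0⟩ := affine_min_low p m hmS hjm
      refine ⟨y0, fun y => ?_⟩
      have hup : F y0 ≤ p m + m*y0 := Finset.sup'_le hS _ hy0
      have hlo : p m + m*y ≤ F y := Finset.le_sup' (fun j => p j + j * y) hmS
      linarith
    rcases eq_or_lt_of_le hk2 with heq | hk2'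
    · rw [heq]
      obtain ⟨y0, hy0⟩ := affine_min_high p n hnS hjn
      refine ⟨y0, fun y => ?_⟩
      have hup : F y0 ≤ p n + n*y0 := Finset.sup'_le hS _ hy0
      have hlo : p n + n*y ≤ F y := Finset.le_sup' (fun j => p j + j * y) hnS
      linarith
    · exact affine_min_mid hS p k m n hmS hnS hk1' hk2'
  have hPcEq : ∀ k, m ≤ k → k ≤ n →
      ∃ y0 : ℝ, Pc k = ↑(F y0 - k*y0) ∧ ∀ y, F y0 - k*y0 ≤ F y - k*y := by
    intro k hk1 hk2
    obtain ⟨y0, hy0⟩ := hmin k hk1 hk2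
    exact ⟨y0, coe_glb_min (hglb k) hy0, hy0⟩
  have hbotHigh : ∀ k, n < k → Pc k = ⊥ := fun k hk =>
    coe_glb_bot (hglb k)
      (fun c => affine_unbdd_high hS p k (fun j hj => lt_of_le_of_lt (hjn j hj) hk) c)
  have hbotLow : ∀ k, k < m → Pc k = ⊥ := fun k hk =>
    coe_glb_bot (hglb k)
      (fun c => affine_unbdd_low hS p k (fun j hj => lt_of_lt_of_le hk (hjm j hj)) c)
  have hPle : ∀ k, P k ≤ Pc k := by
    intro k
    by_cases h : P k = ⊥
    · rw [h]; exact bot_le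
    · have hkn : k < n + 1 := Nat.lt_succ_of_le (le_of_not_gt (fun hc => h (hhigh k hc)))
      have hkS : k ∈ S := Finset.mem_filter.mpr ⟨Finset.mem_range.mpr hkn, h⟩
      rw [hcoeP k hkS]
      apply coe_glb_mono (hglb k)
      intro y
      have := Finset.le_sup' (fun j => p j + j * y) hkS
      change _ ≤ F y at this
      linarith
  have hPcm : Pc m = ↑(p m) := by
    obtain ⟨y0, hy0⟩ := affine_min_low p m hmS hjm
    have hup : F y0 - m*y0 ≤ p m := by
      have := Finset.sup'_le hS (fun j => p j + j * y0) hy0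
      change F y0 ≤ _ at this
      linarith
    have hlo : ∀ y : ℝ, p m ≤ F y - m*y := fun y => by
      have := Finset.le_sup' (fun j => p j + j * y) hmS
      change _ ≤ F y at this
      linarith
    have hmin' : ∀ y, F y0 - m*y0 ≤ F y - m*y := fun y => le_trans hup (hlo y)
    rw [coe_glb_min (hglb m) hmin']
    exact congrArg _ (le_antisymm hup (hlo y0))
  have hPcnne : Pc n ≠ ⊥ := by
    intro hcon
    exact hPn (le_bot_iff.mp (hcon ▸ hPle n))
  have hPcmne : Pc m ≠ ⊥ := by
    intro hcon
    exact hPm (le_bot_iff.mp (hcon ▸ hPle m))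
  have hPhatEq : ∀ y : RMax, tPhat Pc n y = tPhat P n y := by
    intro y
    apply le_antisymm
    · induction y using WithBot.recBotCoe with
      | bot =>
        rw [tPhat_bot, tPhat_bot]
        rcases Nat.eq_zero_or_pos m with hm0 | hm0
        · subst hm0
          rw [hPcm, ← hcoeP 0 hmS]
        · rw [hbotLow 0 hm0]; exact bot_le
      | coe yr =>
        unfold tPhat
        apply Finset.sup_le
        intro k hk
        have h1 : Pc k ≤ ↑(F yr - k*yr) := coe_glb_elem (hglb k) yr
        calc Pc k + k • ((yr : ℝ) : RMax)
            ≤ ↑(F yr - k*yr) + ↑((k:ℝ)*yr) := by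
              rw [rmx_nsmul_coe]; exact add_le_add_left h1 _
          _ = ↑(F yr) := by rw [← WithBot.coe_add]; exact congrArg _ (by ring)
          _ = tPhat P n ↑yr := (hhat yr).symm
    · unfold tPhat
      apply Finset.sup_mono_fun
      intro k _
      exact add_le_add_left (hPle k) _
  refine ⟨?_, ⟨hPcnne, hbotHigh, hPcmne, hbotLow⟩, hPhatEq, ?_⟩
  · intro k
    rcases lt_or_ge k m with h | h
    · exact Or.inl (hbotLow k h)
    rcases le_or_gt k n with h2 | h2
    · right
      obtain ⟨y0, hEq, _⟩ := hPcEq k h h2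
      refine ⟨y0, ?_⟩
      rw [hhat y0, ← WithBot.coe_add, hEq]
      exact congrArg _ (by ring)
    · exact Or.inl (hbotHigh k h2)
  · intro Q N hQhigh hQeq k
    by_cases h : Q k = ⊥
    · rw [h]; exact bot_le
    have hkN : k ≤ N := le_of_not_gt (fun hc => h (hQhigh k hc))
    obtain ⟨q, hq⟩ := WithBot.ne_bot_iff_exists.mp h
    rw [← hq]
    apply coe_glb_mono (hglb k)
    intro y
    have h1 : Q k + k • ((y:ℝ) : RMax) ≤ tPhat Q N (y : RMax) := by
      unfold tPhat
      exact Finset.le_sup (f := fun j => Q j + j • ((y:ℝ) : RMax)) (Finset.mem_range.mpr (by omega : k < N + 1))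
    rw [hQeq (y : RMax), hhat y, ← hq, rmx_nsmul_coe, ← WithBot.coe_add] at h1
    have h2 := WithBot.coe_le_coe.mp h1
    linarith
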